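/- (Theorem 2.) In the composed transition system with wildcard receives, define ample(s) = {B} if B ∈ enabled(s); else ample(s) = {SR} if some non-wildcard SR is enabled and SR ranks first in enabled(s); else ample(s) = enabled(s). Let G̃* be the subgraph keeping from each state only transitions labeled by actions in ample(s). Then for every execution in the full graph G from initial state σ₀ to a deadlocked state σ of length n, there is an execution from σ₀ to σ of length n in G̃*, and conversely. -/

import Mathlib

/-- Local actions of an MPI process: send to a specific destination, receive
from a specific source, wildcard receive (from any source), or barrier. -/
inductive WAct (n : ℕ) where
  | send (dest : Fin n)
  | recv (src : Fin n)
  | recvAny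
  | barrier
deriving DecidableEq

/-- Global actions of the parallel composition with wildcard receives:
`B` (global barrier), `SR i j` (send from `i` matched with the specific
receive at `j`), and `SRW i j` (send from `i` matched with the wildcard
receive at `j`). -/
inductive WGAct (n : ℕ) where
  | B
  | SR (i j : Fin n)
  | SRW (i j : Fin n)
deriving DecidableEq

variable {n : ℕ} {L : Fin n → Type}

/-- Enabledness of global actions in a global state `σ` (an `n`-tuple of local
states), where `next i` gives the unique next local action of deterministic
process `i` (`none` = terminated). -/
def WEnabled (next : ∀ i, L i → Option (WAct n)) (σ : ∀ i, L i) : WGAct n → Prop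
  | .B => ∀ i, next i (σ i) = some .barrier
  | .SR i j => i ≠ j ∧ next i (σ i) = some (.send j) ∧ next j (σ j) = some (.recv i)
  | .SRW i j => i ≠ j ∧ next i (σ i) = some (.send j) ∧ next j (σ j) = some .recvAny

open scoped Classical in
/-- The global step function: `B` advances all components, while `SR i j` and
`SRW i j` advance exactly components `i` and `j`. -/
noncomputable def wstep (next : ∀ i, L i → Option (WAct n)) (adv : ∀ i, L i → L i) :
    WGAct n → (∀ i, L i) → Option (∀ i, L i)
  | .B, σ => if WEnabled next σ .B then some (fun k => adv k (σ k)) else none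
  | .SR i j, σ =>
      if WEnabled next σ (.SR i j) then
        some (Function.update (Function.update σ i (adv i (σ i))) j (adv j (σ j)))
      else none
  | .SRW i j, σ =>
      if WEnabled next σ (.SRW i j) then
        some (Function.update (Function.update σ i (adv i (σ i))) j (adv j (σ j)))
      else none

/-- The weight of a global action: `B` ranks first, and an `SR`/`SRW` action
is weighted by the smaller index of the two processes it advances. -/
def wweight : WGAct n → ℕ
  | .B => 1
  | .SR i j => 2 + min i.val j.val
  | .SRW i j => 2 + min i.val j.val

open scoped Classical in
/-- The ample set of the on-the-fly schedule with lazy matching: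
`{B}` if `B` is enabled; otherwise the (unique) enabled non-wildcard `SR`
action that ranks first in `enabled(σ)`, if such an `SR` exists; otherwise all
enabled actions. -/
noncomputable def ample (next : ∀ i, L i → Option (WAct n)) (σ : ∀ i, L i) :
    Set (WGAct n) :=
  if WEnabled next σ .B then {.B}
  else if (∃ i j : Fin n, WEnabled next σ (.SR i j) ∧
            ∀ g : WGAct n, WEnabled next σ g → wweight (.SR i j) ≤ wweight g) then
    {g : WGAct n | ∃ i j : Fin n, g = .SR i j ∧ WEnabled next σ (.SR i j) ∧
      ∀ g' : WGAct n, WEnabled next σ g' → wweight (.SR i j) ≤ wweight g'}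
  else {g : WGAct n | WEnabled next σ g}

/-- Executions in the full state graph `G`. -/
inductive WRun (next : ∀ i, L i → Option (WAct n)) (adv : ∀ i, L i → L i) :
    List (WGAct n) → (∀ i, L i) → (∀ i, L i) → Prop
  | nil (σ : ∀ i, L i) : WRun next adv [] σ σ
  | cons {g : WGAct n} {l : List (WGAct n)} {σ σ' τ : ∀ i, L i} :
      wstep next adv g σ = some σ' → WRun next adv l σ' τ → WRun next adv (g :: l) σ τ

/-- Executions in the reduced graph `G̃*`, keeping from each state only the
transitions labeled by actions of its ample set. -/
inductive ARun (next : ∀ i, L i → Option (WAct n)) (adv : ∀ i, L i → L i) :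
    List (WGAct n) → (∀ i, L i) → (∀ i, L i) → Prop
  | nil (σ : ∀ i, L i) : ARun next adv [] σ σ
  | cons {g : WGAct n} {l : List (WGAct n)} {σ σ' τ : ∀ i, L i} :
      g ∈ ample next σ → wstep next adv g σ = some σ' →
      ARun next adv l σ' τ → ARun next adv (g :: l) σ τ

/-- A deadlocked global state: no global action is enabled, but at least one
process has not terminated. -/
def WDeadlocked (next : ∀ i, L i → Option (WAct n)) (σ : ∀ i, L i) : Prop :=
  (∀ g : WGAct n, ¬ WEnabled next σ g) ∧ ∃ i : Fin n, (next i (σ i)).isSome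

namespace Stmt15Aux

variable (next : ∀ i, L i → Option (WAct n)) (adv : ∀ i, L i → L i)

/-- The double update performed by an `SR`/`SRW` step. -/
noncomputable def u2 (σ : ∀ i, L i) (i j : Fin n) : ∀ k, L k :=
  Function.update (Function.update σ i (adv i (σ i))) j (adv j (σ j))

variable {next adv}

lemma u2_apply_ne {σ : ∀ i, L i} {i j k : Fin n} (hki : k ≠ i) (hkj : k ≠ j) :
    u2 adv σ i j k = σ k := by
  simp [u2, Function.update_of_ne hkj, Function.update_of_ne hki]

lemma u2_apply_left {σ : ∀ i, L i} {i j : Fin n} (hij : i ≠ j) :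
    u2 adv σ i j i = adv i (σ i) := by
  simp [u2, Function.update_of_ne hij]

lemma u2_apply_right {σ : ∀ i, L i} {i j : Fin n} :
    u2 adv σ i j j = adv j (σ j) := by
  simp [u2]

lemma wstep_sr {σ : ∀ i, L i} {i j : Fin n} (he : WEnabled next σ (.SR i j)) :
    wstep next adv (.SR i j) σ = some (u2 adv σ i j) := by
  simp only [wstep, u2, if_pos he]

lemma wstep_srw {σ : ∀ i, L i} {i j : Fin n} (he : WEnabled next σ (.SRW i j)) :
    wstep next adv (.SRW i j) σ = some (u2 adv σ i j) := by
  simp only [wstep, u2, if_pos he]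

lemma enabled_of_wstep {g : WGAct n} {σ σ' : ∀ i, L i}
    (h : wstep next adv g σ = some σ') : WEnabled next σ g := by
  cases g <;> simp only [wstep] at h <;>
    split_ifs at h with he <;> first | exact he | simp at h

/-- Enabledness of `SR a b` only depends on the components `a` and `b`. -/
lemma sr_enabled_congr {σ σ' : ∀ i, L i} {a b : Fin n} (ha : σ' a = σ a)
    (hb : σ' b = σ b) (h : WEnabled next σ (.SR a b)) :
    WEnabled next σ' (.SR a b) := by
  obtain ⟨h1, h2, h3⟩ := h
  exact ⟨h1, by rw [ha]; exact h2, by rw [hb]; exact h3⟩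

/-- Any enabled action other than a co-enabled `SR a b` is an `SR`/`SRW`
touching neither `a` nor `b`. -/
lemma disj {σ : ∀ i, L i} {a b : Fin n} (hab : WEnabled next σ (.SR a b))
    {g : WGAct n} (hg : WEnabled next σ g) (hne : g ≠ .SR a b) :
    ∃ i j : Fin n, i ≠ j ∧ i ≠ a ∧ i ≠ b ∧ j ≠ a ∧ j ≠ b ∧
      (g = .SR i j ∨ g = .SRW i j) := by
  obtain ⟨hab0, hsa, hrb⟩ := hab
  cases g with
  | B => exact absurd ((hg a).symm.trans hsa) (by simp)
  | SR i j =>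
    obtain ⟨hij, hsi, hrj⟩ := hg
    refine ⟨i, j, hij, ?_, ?_, ?_, ?_, Or.inl rfl⟩
    · rintro rfl
      have h := hsa.symm.trans hsi
      simp only [Option.some.injEq, WAct.send.injEq] at h
      exact hne (by rw [h])
    · rintro rfl
      have h := hrb.symm.trans hsi
      simp at h
    · rintro rfl
      have h := hsa.symm.trans hrj
      simp at h
    · rintro rfl
      have h := hrb.symm.trans hrj
      simp only [Option.some.injEq, WAct.recv.injEq] at h
      exact hne (by rw [h])
  | SRW i j =>
    obtain ⟨hij, hsi, hwj⟩ := hg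
    refine ⟨i, j, hij, ?_, ?_, ?_, ?_, Or.inr rfl⟩
    · rintro rfl
      have h := hsa.symm.trans hsi
      simp only [Option.some.injEq, WAct.send.injEq] at h
      subst h
      have h := hrb.symm.trans hwj
      simp at h
    · rintro rfl
      have h := hrb.symm.trans hsi
      simp at h
    · rintro rfl
      have h := hsa.symm.trans hwj
      simp at h
    · rintro rfl
      have h := hrb.symm.trans hwj
      simp at h

/-- `SR a b` is never disabled by a co-enabled distinct action, and the
enabled `SR a b` must occur on any run ending in a deadlock. -/
lemma mem_of_deadlock {a b : Fin n} :
    ∀ {l : List (WGAct n)} {σ0 σf : ∀ i, L i}, WRun next adv l σ0 σf →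
      WEnabled next σ0 (.SR a b) → (∀ g : WGAct n, ¬ WEnabled next σf g) →
      WGAct.SR a b ∈ l := by
  intro l σ0 σf hrun
  induction hrun with
  | nil σ => intro hen hdead; exact absurd hen (hdead _)
  | @cons g l σ0 σ1 σf hstep hrun ih =>
    intro hen hdead
    by_cases hg : g = .SR a b
    · exact hg ▸ List.mem_cons_self
    · obtain ⟨i, j, hij, hia, hib, hja, hjb, hform⟩ :=
        disj hen (enabled_of_wstep hstep) hg
      have hσ1 : σ1 = u2 adv σ0 i j := by
        rcases hform with rfl | rfl
        · exact (Option.some.inj ((wstep_sr (enabled_of_wstep hstep)).symm.trans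
            hstep)).symm
        · exact (Option.some.inj ((wstep_srw (enabled_of_wstep hstep)).symm.trans
            hstep)).symm
      have hen1 : WEnabled next σ1 (.SR a b) := by
        subst hσ1
        exact sr_enabled_congr (u2_apply_ne (Ne.symm hia) (Ne.symm hja))
          (u2_apply_ne (Ne.symm hib) (Ne.symm hjb)) hen
      exact List.mem_cons_of_mem _ (ih hen1 hdead)

/-- Commuting an enabled `SR a b` with a disjoint preceding step. -/
lemma commute {σ0 σ1 σ2 : ∀ i, L i} {a b i j : Fin n}
    (hab : WEnabled next σ0 (.SR a b)) (hij : i ≠ j) (hia : i ≠ a) (hib : i ≠ b)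
    (hja : j ≠ a) (hjb : j ≠ b) {g : WGAct n}
    (hform : g = WGAct.SR i j ∨ g = WGAct.SRW i j)
    (hstep : wstep next adv g σ0 = some σ1)
    (hstep2 : wstep next adv (.SR a b) σ1 = some σ2) :
    ∃ σ1' : ∀ i, L i, wstep next adv (.SR a b) σ0 = some σ1' ∧
      wstep next adv g σ1' = some σ2 := by
  have hgE := enabled_of_wstep hstep
  have hσ1 : σ1 = u2 adv σ0 i j := by
    rcases hform with rfl | rfl
    · exact (Option.some.inj ((wstep_sr hgE).symm.trans hstep)).symm
    · exact (Option.some.inj ((wstep_srw hgE).symm.trans hstep)).symm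
  have hσ2 : σ2 = u2 adv σ1 a b :=
    (Option.some.inj ((wstep_sr (enabled_of_wstep hstep2)).symm.trans
      hstep2)).symm
  refine ⟨u2 adv σ0 a b, wstep_sr hab, ?_⟩
  have hab' : a ≠ b := hab.1
  have h1a : σ1 a = σ0 a := hσ1 ▸ u2_apply_ne (Ne.symm hia) (Ne.symm hja)
  have h1b : σ1 b = σ0 b := hσ1 ▸ u2_apply_ne (Ne.symm hib) (Ne.symm hjb)
  have hi' : u2 adv σ0 a b i = σ0 i := u2_apply_ne hia hib
  have hj' : u2 adv σ0 a b j = σ0 j := u2_apply_ne hja hjb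
  have hgE' : WEnabled next (u2 adv σ0 a b) g := by
    rcases hform with rfl | rfl
    · exact ⟨hgE.1, by rw [hi']; exact hgE.2.1, by rw [hj']; exact hgE.2.2⟩
    · exact ⟨hgE.1, by rw [hi']; exact hgE.2.1, by rw [hj']; exact hgE.2.2⟩
  have hkey : u2 adv (u2 adv σ0 a b) i j = σ2 := by
    subst hσ2 hσ1
    funext k
    by_cases hki : k = i
    · subst hki
      rw [u2_apply_left hij, hi', u2_apply_ne hia hib, u2_apply_left hij]
    by_cases hkj : k = j
    · subst hkj
      rw [u2_apply_right, hj', u2_apply_ne hja hjb, u2_apply_right]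
    by_cases hka : k = a
    · subst hka
      rw [u2_apply_ne hki hkj, u2_apply_left hab',
        u2_apply_left hab', u2_apply_ne (Ne.symm hia) (Ne.symm hja)]
    by_cases hkb : k = b
    · subst hkb
      rw [u2_apply_ne hki hkj, u2_apply_right, u2_apply_right,
        u2_apply_ne (Ne.symm hib) (Ne.symm hjb)]
    rw [u2_apply_ne hki hkj, u2_apply_ne hka hkb, u2_apply_ne hka hkb,
      u2_apply_ne hki hkj]
  rcases hform with rfl | rfl
  · rw [wstep_sr hgE', hkey]
  · rw [wstep_srw hgE', hkey]

/-- An enabled `SR a b` occurring on a run can be pulled to the front. -/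
lemma pull {a b : Fin n} :
    ∀ {l : List (WGAct n)} {σ0 σf : ∀ i, L i}, WRun next adv l σ0 σf →
      WEnabled next σ0 (.SR a b) → WGAct.SR a b ∈ l →
      ∃ l' : List (WGAct n), l'.length + 1 = l.length ∧
        WRun next adv (.SR a b :: l') σ0 σf := by
  intro l σ0 σf hrun
  induction hrun with
  | nil σ => intro _ hmem; simp at hmem
  | @cons g l σ0 σ1 σf hstep hrun ih =>
    intro hen hmem
    by_cases hg : g = .SR a b
    · exact ⟨l, rfl, hg ▸ WRun.cons hstep hrun⟩
    · obtain ⟨i, j, hij, hia, hib, hja, hjb, hform⟩ :=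
        disj hen (enabled_of_wstep hstep) hg
      have hσ1 : σ1 = u2 adv σ0 i j := by
        rcases hform with rfl | rfl
        · exact (Option.some.inj ((wstep_sr (enabled_of_wstep hstep)).symm.trans
            hstep)).symm
        · exact (Option.some.inj ((wstep_srw (enabled_of_wstep hstep)).symm.trans
            hstep)).symm
      have hen1 : WEnabled next σ1 (.SR a b) := by
        subst hσ1
        exact sr_enabled_congr (u2_apply_ne (Ne.symm hia) (Ne.symm hja))
          (u2_apply_ne (Ne.symm hib) (Ne.symm hjb)) hen
      have hmem' : WGAct.SR a b ∈ l := by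
        rcases List.mem_cons.1 hmem with h | h
        · exact absurd h.symm hg
        · exact h
      obtain ⟨l', hlen, hrun'⟩ := ih hen1 hmem'
      cases hrun' with
      | cons hstep2 hrun2 =>
        obtain ⟨σ1', hstepA, hstepG⟩ :=
          commute hen hij hia hib hja hjb hform hstep hstep2
        exact ⟨g :: l', by simp [← hlen], WRun.cons hstepA
          (WRun.cons hstepG hrun2)⟩

end Stmt15Aux

/-- Theorem 2: in the composed transition system with wildcard
receives (with an acyclic state graph), for every execution in the full graph
from `σ₀` to a deadlocked state `σ` of length `n` there is an execution of
length `n` from `σ₀` to `σ` in the reduced graph `G̃*` defined by the ample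
sets, and conversely every reduced execution is an execution of the full
graph. -/
theorem stmt15 (next : ∀ i, L i → Option (WAct n)) (adv : ∀ i, L i → L i)
    (hacyc : ∀ (σ : ∀ i, L i) (l : List (WGAct n)), l ≠ [] →
      WRun next adv l σ σ → False)
    (σ0 σ : ∀ i, L i) (hdead : WDeadlocked next σ) (l : List (WGAct n)) :
    (WRun next adv l σ0 σ →
      ∃ l' : List (WGAct n), l'.length = l.length ∧ ARun next adv l' σ0 σ) ∧
    (ARun next adv l σ0 σ → WRun next adv l σ0 σ) := by
  constructor
  · -- forward direction, by induction on the length of the run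
    have main : ∀ (m : ℕ) (l : List (WGAct n)) (σ0 : ∀ i, L i), l.length = m →
        WRun next adv l σ0 σ →
        ∃ l' : List (WGAct n), l'.length = l.length ∧ ARun next adv l' σ0 σ := by
      intro m
      induction m with
      | zero =>
        intro l σ0 hlen hrun
        rw [List.length_eq_zero_iff] at hlen
        subst hlen
        cases hrun
        exact ⟨[], rfl, ARun.nil σ⟩
      | succ m ih =>
        intro l σ0 hlen hrun
        cases l with
        | nil => simp at hlen
        | cons g rest =>
          simp only [List.length_cons, Nat.add_right_cancel_iff] at hlen
          cases hrun with
          | cons hstep hrun1 =>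
            rename_i σ1
            by_cases hB : WEnabled next σ0 .B
            · have hgB : g = .B := by
                cases g with
                | B => rfl
                | SR i j =>
                  have h := (Stmt15Aux.enabled_of_wstep hstep).2.1
                  rw [hB i] at h
                  simp at h
                | SRW i j =>
                  have h := (Stmt15Aux.enabled_of_wstep hstep).2.1
                  rw [hB i] at h
                  simp at h
              subst hgB
              have hamp : WGAct.B ∈ ample next σ0 := by
                unfold ample
                rw [if_pos hB]
                rfl
              obtain ⟨l'', hlen'', ar⟩ := ih rest σ1 hlen hrun1
              exact ⟨.B :: l'', by simp [hlen''], ARun.cons hamp hstep ar⟩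
            · by_cases hmin : ∃ i j : Fin n, WEnabled next σ0 (.SR i j) ∧
                  ∀ g : WGAct n, WEnabled next σ0 g →
                    wweight (.SR i j) ≤ wweight g
              · obtain ⟨a, b, hen, hle⟩ := hmin
                have hmem := Stmt15Aux.mem_of_deadlock
                  (WRun.cons hstep hrun1) hen hdead.1
                obtain ⟨l1, hl1, hrun'⟩ :=
                  Stmt15Aux.pull (WRun.cons hstep hrun1) hen hmem
                cases hrun' with
                | cons hstepA hrunA =>
                  rename_i σ1'
                  have hamp : WGAct.SR a b ∈ ample next σ0 := by
                    unfold ample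
                    rw [if_neg hB, if_pos ⟨a, b, hen, hle⟩]
                    exact ⟨a, b, rfl, hen, hle⟩
                  have hl1' : l1.length = m := by
                    simp only [List.length_cons] at hl1
                    omega
                  obtain ⟨l'', hlen'', ar⟩ := ih l1 σ1' hl1' hrunA
                  refine ⟨.SR a b :: l'', ?_, ARun.cons hamp hstepA ar⟩
                  simp [hlen'', hl1', hlen]
              · have hamp : g ∈ ample next σ0 := by
                  unfold ample
                  rw [if_neg hB, if_neg hmin]
                  exact Stmt15Aux.enabled_of_wstep hstep
                obtain ⟨l'', hlen'', ar⟩ := ih rest σ1 hlen hrun1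
                exact ⟨g :: l'', by simp [hlen''], ARun.cons hamp hstep ar⟩
    intro hrun
    exact main l.length l σ0 rfl hrun
  · intro h
    clear hdead hacyc
    induction h with
    | nil σ => exact WRun.nil σ
    | cons _ hstep _ ih => exact WRun.cons hstep ih
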